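/- The operator T_{α,β} is hyponormal: for every x ∈ H one has ‖T*_{α,β} x‖ ≤ ‖T_{α,β} x‖ (equivalently, T*_{α,β}T_{α,β} − T_{α,β}T*_{α,β} is a positive operator). -/

import Mathlib

open scoped ComplexConjugate

open scoped InnerProductSpace

noncomputable section

/-- The Hilbert space `H = ℓ²(ℕ, ℂ)`. -/
abbrev H : Type := lp (fun _ : ℕ => ℂ) 2

/-- The standard orthonormal basis vectors of `ℓ²(ℕ, ℂ)`. -/
noncomputable def e (n : ℕ) : H := lp.single 2 n (1 : ℂ)

lemma coord (y : H) (n : ℕ) : (⟪e n, y⟫_ℂ : ℂ) = y n := by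
  rw [e, lp.inner_single_left]
  simp [RCLike.inner_apply]

lemma e_apply (n m : ℕ) : (e n : ∀ _ : ℕ, ℂ) m = if m = n then 1 else 0 := by
  rw [e, lp.single_apply]
  split_ifs with h <;> simp [h]

lemma rpow_two_eq (r : ℝ) : r ^ (2:ℝ) = r ^ (2:ℕ) := by
  rw [← Real.rpow_natCast r 2]; norm_num

lemma norm_sq_eq (y : H) : ‖y‖ ^ 2 = ∑' n, ‖y n‖ ^ 2 := by
  have h := lp.norm_rpow_eq_tsum (p := 2) (by norm_num) y
  simp only [ENNReal.toReal_ofNat, rpow_two_eq] at h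
  exact h

lemma summable_sq (y : H) : Summable (fun n => ‖y n‖ ^ 2) := by
  have h := (lp.memℓp y).summable (p := 2) (by norm_num)
  simp only [ENNReal.toReal_ofNat, rpow_two_eq] at h
  exact h

set_option maxHeartbeats 1000000 in
/-- The operator `T_{α,β}` is hyponormal: `‖T* x‖ ≤ ‖T x‖` for every `x`. -/
theorem T_hyponormal (α β : ℂ) (hα : α ≠ 0) (hβ : β ≠ 0)
    (hnorm : ‖α‖ ^ 2 + ‖β‖ ^ 2 = 1)
    (T : H →L[ℂ] H)
    (hT0 : T (e 0) = (α * conj β) • e 0 + β • e 1)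
    (hTn : ∀ n : ℕ, 1 ≤ n → T (e n) = e (n + 1)) :
    ∀ x : H, ‖ContinuousLinearMap.adjoint T x‖ ≤ ‖T x‖ := by
  intro x
  set S := ContinuousLinearMap.adjoint T with hSdef
  have hcoordS : ∀ (y : H) (m : ℕ), (S y) m = ⟪T (e m), y⟫_ℂ := fun y m => by
    rw [← coord, hSdef, ContinuousLinearMap.adjoint_inner_right]
  have hcoordT : ∀ (m : ℕ), (T x) m = ⟪S (e m), x⟫_ℂ := fun m => by
    rw [← coord, hSdef, ContinuousLinearMap.adjoint_inner_left]
  have hS0 : (S x) 0 = conj α * β * x 0 + conj β * x 1 := by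
    rw [hcoordS, hT0, inner_add_left, inner_smul_left, inner_smul_left, coord, coord]
    simp [map_mul]
  have hSn : ∀ n : ℕ, (S x) (n + 1) = x (n + 2) := fun n => by
    rw [hcoordS, hTn (n + 1) (Nat.le_add_left 1 n), coord]
  have hSapp : ∀ k m : ℕ, (S (e k)) m = conj ((T (e m)) k) := fun k m => by
    rw [hcoordS, ← inner_conj_symm, coord]
  have hSe0 : S (e 0) = (conj α * β) • e 0 := by
    apply lp.ext
    funext m
    rw [hSapp]
    rcases m with _ | j
    · simp [hT0, lp.coeFn_add, lp.coeFn_smul, Pi.add_apply, Pi.smul_apply, e_apply, map_mul]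
      erw [Pi.add_apply, Pi.smul_apply, Pi.smul_apply, e_apply, e_apply]
      simp [map_mul]
    · simp [hTn (j + 1) (Nat.le_add_left 1 j), lp.coeFn_smul, e_apply]
  have hSe1 : S (e 1) = (conj β) • e 0 := by
    apply lp.ext
    funext m
    rw [hSapp]
    rcases m with _ | j
    · simp [hT0, lp.coeFn_add, lp.coeFn_smul, Pi.add_apply, Pi.smul_apply, e_apply]
      erw [Pi.add_apply, Pi.smul_apply, Pi.smul_apply, e_apply, e_apply]
      simp [map_mul]
    · simp [hTn (j + 1) (Nat.le_add_left 1 j), lp.coeFn_smul, e_apply]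
  have hSen : ∀ n : ℕ, S (e (n + 2)) = e (n + 1) := by
    intro n
    apply lp.ext
    funext m
    rw [hSapp]
    rcases m with _ | j
    · simp [hT0, lp.coeFn_add, lp.coeFn_smul, Pi.add_apply, Pi.smul_apply, e_apply]
      erw [Pi.add_apply, Pi.smul_apply, Pi.smul_apply, e_apply]
      simp [map_mul]
    · simp only [hTn (j + 1) (Nat.le_add_left 1 j), e_apply]
      split_ifs with h1 h2 <;> simp_all
  have hTx0 : (T x) 0 = α * conj β * x 0 := by
    rw [hcoordT, hSe0, inner_smul_left, coord]
    simp [map_mul]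
  have hTx1 : (T x) 1 = β * x 0 := by
    rw [hcoordT, hSe1, inner_smul_left, coord]
    simp
  have hTxn : ∀ n : ℕ, (T x) (n + 2) = x (n + 1) := fun n => by
    rw [hcoordT, hSen, coord]
  -- norms
  have hsum := summable_sq x
  have hsum1 : Summable (fun n => ‖x (n + 1)‖ ^ 2) := (summable_nat_add_iff 1).2 hsum
  have hN1 : ‖S x‖ ^ 2 = ‖(S x) 0‖ ^ 2 + ∑' n, ‖x (n + 2)‖ ^ 2 := by
    rw [norm_sq_eq, Summable.tsum_eq_zero_add (summable_sq (S x))]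
    congr 1
    exact tsum_congr fun n => by rw [hSn]
  have hN2 : ‖T x‖ ^ 2 = ‖(T x) 0‖ ^ 2 + (‖(T x) 1‖ ^ 2 + (‖x 1‖ ^ 2 + ∑' n, ‖x (n + 2)‖ ^ 2)) := by
    rw [norm_sq_eq, Summable.tsum_eq_zero_add (summable_sq (T x))]
    congr 1
    rw [Summable.tsum_eq_zero_add ((summable_nat_add_iff 1).2 (summable_sq (T x)))]
    congr 1
    have h1 : (∑' n, ‖(T x) (n + 1 + 1)‖ ^ 2) = ∑' n, ‖x (n + 1)‖ ^ 2 :=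
      tsum_congr fun n => by rw [hTxn]
    rw [h1, Summable.tsum_eq_zero_add hsum1]
  -- scalar inequality
  have hA : (0:ℝ) < ‖α‖ := norm_pos_iff.2 hα
  have hB : (0:ℝ) < ‖β‖ := norm_pos_iff.2 hβ
  have hAB : ‖α‖ ^ 2 + ‖β‖ ^ 2 = 1 := by
    simpa using hnorm
  have ha : (0:ℝ) ≤ ‖x 0‖ := norm_nonneg _
  have hb : (0:ℝ) ≤ ‖x 1‖ := norm_nonneg _
  have key : ‖(S x) 0‖ ^ 2 ≤ ‖(T x) 0‖ ^ 2 + (‖(T x) 1‖ ^ 2 + ‖x 1‖ ^ 2) := by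
    rw [hS0, hTx0, hTx1]
    have h1 : ‖conj α * β * x 0 + conj β * x 1‖ ≤ ‖α‖ * ‖β‖ * ‖x 0‖ + ‖β‖ * ‖x 1‖ := by
      calc ‖conj α * β * x 0 + conj β * x 1‖ ≤ ‖conj α * β * x 0‖ + ‖conj β * x 1‖ :=
            norm_add_le _ _
        _ = ‖α‖ * ‖β‖ * ‖x 0‖ + ‖β‖ * ‖x 1‖ := by simp [norm_mul, RCLike.norm_conj]
    have h2 : ‖conj α * β * x 0 + conj β * x 1‖ ^ 2 ≤ (‖α‖ * ‖β‖ * ‖x 0‖ + ‖β‖ * ‖x 1‖) ^ 2 :=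
      pow_le_pow_left₀ (norm_nonneg _) h1 2
    have h3 : ‖α * conj β * x 0‖ ^ 2 = ‖α‖ ^ 2 * ‖β‖ ^ 2 * ‖x 0‖ ^ 2 := by
      simp [norm_mul, RCLike.norm_conj]; ring
    have h4 : ‖β * x 0‖ ^ 2 = ‖β‖ ^ 2 * ‖x 0‖ ^ 2 := by
      simp [norm_mul]; ring
    rw [h3, h4]
    have h5 : (‖α‖ ^ 2 + ‖β‖ ^ 2) * ‖x 1‖ ^ 2 = ‖x 1‖ ^ 2 := by rw [hAB, one_mul]
    have h7 : (‖α‖ ^ 2 + ‖β‖ ^ 2) * (‖α‖ ^ 2 * ‖x 1‖ ^ 2) = ‖α‖ ^ 2 * ‖x 1‖ ^ 2 := by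
      rw [hAB, one_mul]
    nlinarith [h2, sq_nonneg (‖β‖ * ‖x 0‖ - ‖α‖ * ‖β‖ * ‖x 1‖), h5, h7,
      sq_nonneg (‖α‖ ^ 2 * ‖x 1‖)]
  have hle : ‖S x‖ ^ 2 ≤ ‖T x‖ ^ 2 := by
    rw [hN1, hN2]
    linarith
  nlinarith [norm_nonneg (S x), norm_nonneg (T x), hle]

end
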